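/- For positive reals λ, μ, c with ρ := λ/μ < 1/2, the function s ↦ (1 + ρμ s/(2c)) / (1 + ρμ s / (c(1 − (ρ/(1−ρ)))) ), evaluated at s replaced by (1/2 − ρ)s, converges as ρ ↑ 1/2 to 1/(1 + (μ/(8c)) s) for every s ≥ 0. -/

import Mathlib

open Filter Topology

/-- heavy-traffic limit of the marginal workload LST in the
symmetric case: with `F ρ s = (1 + ρμs/(2c)) / (1 + ρμs/(c(1 − ρ/(1−ρ))))`,
for every `s ≥ 0`,  `F ρ ((1/2 − ρ)s) → 1/(1 + (μ/(8c))s)` as `ρ ↑ 1/2`. -/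
theorem stmt_3 (μ c : ℝ) (hμ : 0 < μ) (hc : 0 < c) (s : ℝ) (hs : 0 ≤ s) :
    Tendsto
      (fun ρ : ℝ =>
        (1 + ρ * μ * ((1/2 - ρ) * s) / (2 * c)) /
        (1 + ρ * μ * ((1/2 - ρ) * s) / (c * (1 - ρ / (1 - ρ)))))
      (nhdsWithin (1/2) (Set.Iio (1/2)))
      (nhds (1 / (1 + (μ / (8 * c)) * s))) := by
  have hden : (0:ℝ) < 1 + μ / (8 * c) * s := by positivity
  have hg : Tendsto
      (fun ρ : ℝ =>
        (1 + ρ * μ * ((1/2 - ρ) * s) / (2 * c)) /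
        (1 + ρ * μ * s * (1 - ρ) / (2 * c)))
      (nhdsWithin (1/2) (Set.Iio (1/2)))
      (nhds (1 / (1 + (μ / (8 * c)) * s))) := by
    have hcont : ContinuousAt
        (fun ρ : ℝ =>
          (1 + ρ * μ * ((1/2 - ρ) * s) / (2 * c)) /
          (1 + ρ * μ * s * (1 - ρ) / (2 * c))) (1/2) := by
      apply ContinuousAt.div
      · fun_prop
      · fun_prop
      · have : 1 + (1/2 : ℝ) * μ * s * (1 - 1/2) / (2 * c) = 1 + μ / (8 * c) * s := by
          field_simp; ring
        simp only [this]
        exact ne_of_gt hden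
    have := hcont.tendsto
    have hval : (1 + (1/2 : ℝ) * μ * ((1/2 - 1/2) * s) / (2 * c)) /
        (1 + (1/2 : ℝ) * μ * s * (1 - 1/2) / (2 * c)) = 1 / (1 + μ / (8 * c) * s) := by
      have h8 : (1 : ℝ) + (1/2 : ℝ) * μ * s * (1 - 1/2) / (2 * c) = 1 + μ / (8 * c) * s := by
        field_simp; ring
      rw [h8]; norm_num
    rw [hval] at this
    exact tendsto_nhdsWithin_of_tendsto_nhds this
  refine hg.congr' ?_
  have hmem : Set.Ioi (0:ℝ) ∈ nhdsWithin (1/2 : ℝ) (Set.Iio (1/2)) :=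
    nhdsWithin_le_nhds (Ioi_mem_nhds (by norm_num))
  filter_upwards [hmem, self_mem_nhdsWithin] with ρ h0 h1
  have hρ1 : (1:ℝ) - ρ ≠ 0 := by
    have : ρ < 1/2 := h1
    nlinarith
  have hρ2 : (1:ℝ) - 2 * ρ ≠ 0 := by
    have : ρ < 1/2 := h1
    nlinarith
  congr 1
  have hrw : 1 - ρ / (1 - ρ) = (1 - 2 * ρ) / (1 - ρ) := by field_simp; ring
  rw [hrw]
  have hcne : c ≠ 0 := ne_of_gt hc
  have hρ3 : (1:ℝ) - ρ * 2 ≠ 0 := by rw [mul_comm]; exact hρ2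
  field_simp
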